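/- Let q ≥ 2 and let S ⊆ Σ_q^{n1} and T ⊆ Σ_q^{n1+1} be such that every y ∈ Σ_q^{n1+1} \ T has some s ∈ S as a subsequence, and let C ⊆ Σ_q^{n2} be a single-insertion-covering code. Then the code {s·y : s ∈ S, y ∈ Σ_q^{n2+1}} ∪ {t·c : t ∈ T, c ∈ C} ⊆ Σ_q^{n1+n2+1} (where · is concatenation) is a single-insertion-covering code of length n1+n2+1, of size at most |S|·q^{n2+1} + |T|·|C|. -/

import Mathlib

/-- The finset of all words of length `n` over the alphabet `Fin q`. -/
def allWords (q n : ℕ) : Finset (List (Fin q)) :=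
  (Finset.univ : Finset (Fin n → Fin q)).image List.ofFn

lemma mem_allWords {q n : ℕ} {l : List (Fin q)} :
    l ∈ allWords q n ↔ l.length = n := by
  simp only [allWords, Finset.mem_image, Finset.mem_univ, true_and]
  constructor
  · rintro ⟨f, rfl⟩; simp
  · rintro rfl; exact ⟨l.get, by simp [List.ofFn_get]⟩

lemma card_allWords (q n : ℕ) : (allWords q n).card = q ^ n := by
  rw [allWords, Finset.card_image_of_injective _ (by
    intro a b h
    funext i
    have := congrArg (fun l => l[(i : ℕ)]?) h
    simpa using this)]
  simp

/-- Semi-direct sum of covering codes: if `S ⊆ Σ_q^{n1}` covers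
`Σ_q^{n1+1} \ T` with a single insertion and `C ⊆ Σ_q^{n2}` is a
single-insertion-covering code, then
`(S ⊗ Σ_q^{n2+1}) ∪ (T ⊗ C)` is a single-insertion-covering code of length
`n1+n2+1` of size at most `|S|·q^(n2+1) + |T|·|C|`. -/
theorem semidirect_sum_single_insertion (q n1 n2 : ℕ) (hq : 2 ≤ q)
    (S T C : Finset (List (Fin q)))
    (hS : ∀ s ∈ S, s.length = n1)
    (hT : ∀ t ∈ T, t.length = n1 + 1)
    (hST : ∀ y : List (Fin q), y.length = n1 + 1 → y ∉ T → ∃ s ∈ S, s.Sublist y)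
    (hC : ∀ c ∈ C, c.length = n2)
    (hCcov : ∀ y : List (Fin q), y.length = n2 + 1 → ∃ c ∈ C, c.Sublist y) :
    (∀ d ∈ (S ×ˢ allWords q (n2 + 1)).image (fun p => p.1 ++ p.2) ∪
            (T ×ˢ C).image (fun p => p.1 ++ p.2),
        d.length = n1 + n2 + 1) ∧
    (∀ y : List (Fin q), y.length = n1 + n2 + 2 →
      ∃ d ∈ (S ×ˢ allWords q (n2 + 1)).image (fun p => p.1 ++ p.2) ∪
             (T ×ˢ C).image (fun p => p.1 ++ p.2),
        d.Sublist y) ∧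
    ((S ×ˢ allWords q (n2 + 1)).image (fun p => p.1 ++ p.2) ∪
      (T ×ˢ C).image (fun p => p.1 ++ p.2)).card
      ≤ S.card * q ^ (n2 + 1) + T.card * C.card := by
  refine ⟨?_, ?_, ?_⟩
  · intro d hd
    rcases Finset.mem_union.1 hd with h | h <;>
      · obtain ⟨⟨a, b⟩, hab, rfl⟩ := Finset.mem_image.1 h
        obtain ⟨ha, hb⟩ := Finset.mem_product.1 hab
        simp only [List.length_append]
        first
        | (rw [hS a ha, mem_allWords.1 hb]; omega)
        | (rw [hT a ha, hC b hb]; omega)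
  · intro y hy
    set y1 := y.take (n1 + 1) with hy1
    set y2 := y.drop (n1 + 1) with hy2
    have hlen1 : y1.length = n1 + 1 := by simp [hy1, hy]; omega
    have hlen2 : y2.length = n2 + 1 := by simp [hy2, hy]; omega
    have hsplit : y1 ++ y2 = y := List.take_append_drop _ _
    by_cases hyT : y1 ∈ T
    · obtain ⟨c, hc, hcsub⟩ := hCcov y2 hlen2
      refine ⟨y1 ++ c, Finset.mem_union_right _ ?_, ?_⟩
      · exact Finset.mem_image.2 ⟨(y1, c), Finset.mem_product.2 ⟨hyT, hc⟩, rfl⟩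
      · rw [← hsplit]; exact (List.Sublist.refl y1).append hcsub
    · obtain ⟨s, hs, hssub⟩ := hST y1 hlen1 hyT
      refine ⟨s ++ y2, Finset.mem_union_left _ ?_, ?_⟩
      · exact Finset.mem_image.2
          ⟨(s, y2), Finset.mem_product.2 ⟨hs, mem_allWords.2 hlen2⟩, rfl⟩
      · rw [← hsplit]; exact hssub.append (List.Sublist.refl y2)
  · calc ((S ×ˢ allWords q (n2 + 1)).image (fun p => p.1 ++ p.2) ∪
        (T ×ˢ C).image (fun p => p.1 ++ p.2)).card
        ≤ ((S ×ˢ allWords q (n2 + 1)).image (fun p => p.1 ++ p.2)).card +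
          ((T ×ˢ C).image (fun p => p.1 ++ p.2)).card := Finset.card_union_le _ _
      _ ≤ (S ×ˢ allWords q (n2 + 1)).card + (T ×ˢ C).card :=
          Nat.add_le_add (Finset.card_image_le) (Finset.card_image_le)
      _ = S.card * q ^ (n2 + 1) + T.card * C.card := by
          rw [Finset.card_product, Finset.card_product, card_allWords]
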